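/- For every integer n ≥ 2: if n is even, the polynomial C_n has no real roots; if n is odd, the polynomial C_n has exactly one real root, and this root lies in the open interval (-1, 0). -/

import Mathlib

open Finset Polynomial

/-- For `n ≥ 2`, the polynomial `C_n ∈ ℚ[x]` of degree `n-2`, defined by
`C_n(x) = ∑_{k=0}^{n-2} binom(n-1, k+1) (H_{n-1} - H_{n-k-2}) x^k`. -/
noncomputable def Cpoly (n : ℕ) : Polynomial ℚ :=
  ∑ k ∈ Finset.range (n - 1),
    Polynomial.C (((n - 1).choose (k + 1) : ℚ) * (harmonic (n - 1) - harmonic (n - k - 2))) *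
      Polynomial.X ^ k

def Aq (m k : ℕ) : ℚ := (m.choose (k+1) : ℚ) * (harmonic m - harmonic (m - k - 1))
def Bq (m k : ℕ) : ℚ := (m.choose k : ℚ) * (harmonic m - harmonic (m - k))

lemma keyA (m k : ℕ) (hk : k < m) : Aq (m+1) k = Aq m k + Bq m k := by
  unfold Aq Bq
  obtain ⟨r, hr⟩ : ∃ r, m - k = r + 1 := ⟨m - k - 1, by omega⟩
  have hr1 : m - k - 1 = r := by omega
  have hr2 : m + 1 - k - 1 = r + 1 := by omega
  rw [hr1, hr2, hr, harmonic_succ m, harmonic_succ r]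
  have hp : ((m+1).choose (k+1) : ℚ) = m.choose k + m.choose (k+1) := by
    rw [Nat.choose_succ_succ]; push_cast; ring
  have hc : (m.choose (k+1) : ℚ) * (m+1) = ((m+1).choose (k+1) : ℚ) * (r+1) := by
    have := Nat.choose_mul_succ_eq m (k+1)
    have h2 : m + 1 - (k+1) = r + 1 := by omega
    rw [h2] at this
    exact_mod_cast congrArg (Nat.cast : ℕ → ℚ) this
  have h1 : ((m:ℚ)+1) ≠ 0 := by positivity
  have h2 : ((r:ℚ)+1) ≠ 0 := by positivity
  field_simp
  push_cast; linear_combination (((m:ℚ)+1)*((r:ℚ)+1)*(harmonic m - harmonic r) - ((m:ℚ)+1)) * hp - hc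

lemma topA (m : ℕ) : Aq (m+1) m = Bq m m + 1/(m+1) := by
  unfold Aq Bq
  rw [show m + 1 - m - 1 = 0 from by omega, show m - m = 0 from by omega,
    Nat.choose_self, Nat.choose_self, harmonic_succ]
  rw [harmonic_zero]
  push_cast
  ring

lemma BA (m k : ℕ) : Bq m (k+1) = Aq m k := by
  unfold Aq Bq
  rw [show m - (k+1) = m - k - 1 from by omega]

lemma Bzero (m : ℕ) : Bq m 0 = harmonic m - harmonic m := by
  simp [Bq]

lemma ident (m : ℕ) (x : ℝ) :
    ∑ k ∈ range m, (Aq m k : ℝ) * x^k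
      = ∑ k ∈ range m, x^k * (1+x)^(m-1-k) / ((k:ℝ)+1) := by
  induction m with
  | zero => simp
  | succ m ih =>
    have e3 : ∑ k ∈ range (m+1), (Bq m k : ℝ) * x^k
        = x * ∑ k ∈ range m, (Aq m k : ℝ) * x^k := by
      rw [Finset.sum_range_succ', Finset.mul_sum]
      have : ∀ k ∈ range m, (Bq m (k+1) : ℝ) * x^(k+1) = x * ((Aq m k : ℝ) * x^k) := by
        intro k _
        rw [BA]; ring
      rw [Finset.sum_congr rfl this, Bzero]
      push_cast
      ring
    have e23 : (∑ k ∈ range m, (Bq m k : ℝ) * x^k) + (Bq m m : ℝ) * x^m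
        = x * ∑ k ∈ range m, (Aq m k : ℝ) * x^k := by
      rw [← e3, Finset.sum_range_succ]
    have hL : ∑ k ∈ range (m+1), (Aq (m+1) k : ℝ) * x^k
        = (1+x) * (∑ k ∈ range m, (Aq m k : ℝ) * x^k) + x^m / ((m:ℝ)+1) := by
      rw [Finset.sum_range_succ]
      have e1 : ∀ k ∈ range m, (Aq (m+1) k : ℝ) * x^k
          = (Aq m k : ℝ) * x^k + (Bq m k : ℝ) * x^k := by
        intro k hk
        rw [keyA m k (mem_range.mp hk)]; push_cast; ring
      rw [Finset.sum_congr rfl e1, Finset.sum_add_distrib]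
      have e4 : ((Aq (m+1) m : ℚ) : ℝ) = (Bq m m : ℝ) + 1/((m:ℝ)+1) := by
        rw [topA]; push_cast; ring
      rw [e4]
      linear_combination e23
    have hR : ∑ k ∈ range (m+1), x^k * (1+x)^(m+1-1-k) / ((k:ℝ)+1)
        = (1+x) * (∑ k ∈ range m, x^k * (1+x)^(m-1-k) / ((k:ℝ)+1)) + x^m / ((m:ℝ)+1) := by
      rw [Finset.sum_range_succ, Finset.mul_sum]
      have e5 : ∀ k ∈ range m, x^k * (1+x)^(m+1-1-k) / ((k:ℝ)+1)
          = (1+x) * (x^k * (1+x)^(m-1-k) / ((k:ℝ)+1)) := by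
        intro k hk
        have hk' := mem_range.mp hk
        rw [show m+1-1-k = (m-1-k)+1 from by omega, pow_succ]
        ring
      rw [Finset.sum_congr rfl e5, show m+1-1-m = 0 from by omega]
      norm_num
    rw [hL, hR, ih]

lemma aeval_Cpoly (n : ℕ) (x : ℝ) :
    Polynomial.aeval x (Cpoly n) = ∑ k ∈ range (n-1), (Aq (n-1) k : ℝ) * x^k := by
  unfold Cpoly Aq
  rw [map_sum]
  apply Finset.sum_congr rfl
  intro k hk
  rw [map_mul, Polynomial.aeval_C, map_pow, Polynomial.aeval_X,
    show n - k - 2 = n - 1 - k - 1 from by omega]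
  norm_num

noncomputable def Dr (m : ℕ) (x : ℝ) : ℝ := ∑ k ∈ range m, x^k * (1+x)^(m-1-k) / ((k:ℝ)+1)
noncomputable def aP (m : ℕ) (v : ℝ) : ℝ := ∑ k ∈ range m, (-1:ℝ)^k * v^(k+1) / ((k:ℝ)+1)

lemma aeval_eq_Dr (n : ℕ) (x : ℝ) : Polynomial.aeval x (Cpoly n) = Dr (n-1) x := by
  rw [aeval_Cpoly, ident]; rfl

lemma hasDerivAt_aP (m : ℕ) (v : ℝ) : HasDerivAt (aP m) (∑ k ∈ range m, (-v)^k) v := by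
  have h : ∀ k ∈ range m, HasDerivAt (fun v : ℝ => (-1:ℝ)^k * v^(k+1) / ((k:ℝ)+1)) ((-v)^k) v := by
    intro k _
    have h2 := ((hasDerivAt_pow (k+1) v).const_mul ((-1:ℝ)^k)).div_const ((k:ℝ)+1)
    refine h2.congr_deriv ?_
    have hk : ((k:ℝ)+1) ≠ 0 := by positivity
    rw [neg_pow]
    field_simp
    push_cast
    ring
  exact HasDerivAt.fun_sum h

lemma aP_zero (m : ℕ) : aP m 0 = 0 := by
  simp [aP]

lemma aP_cont (m : ℕ) : Continuous (aP m) := by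
  unfold aP
  exact continuous_finset_sum _ fun k _ =>
    (continuous_const.mul (continuous_pow (k+1))).div_const _

lemma deriv_aP (m : ℕ) (v : ℝ) (hv : 0 < v) :
    deriv (aP m) v = (1 - (-v)^m) / (1+v) := by
  rw [(hasDerivAt_aP m v).deriv, geom_sum_eq (by intro h; linarith : (-v) ≠ 1)]
  have : (-v) - 1 ≠ 0 := by intro h; nlinarith [h]
  have h1v : (1:ℝ) + v ≠ 0 := by positivity
  field_simp
  ring

lemma aP_pos_odd (m : ℕ) (hm : Odd m) (v : ℝ) (hv : 0 < v) : 0 < aP m v := by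
  have mono : StrictMonoOn (aP m) (Set.Ici (0:ℝ)) := by
    apply strictMonoOn_of_deriv_pos (convex_Ici 0) (aP_cont m).continuousOn
    intro x hx
    rw [interior_Ici] at hx
    have hx0 : 0 < x := hx
    rw [deriv_aP m x hx0, Odd.neg_pow hm]
    have h1 : (0:ℝ) < 1 + x := by linarith
    have h2 : (0:ℝ) < x^m := pow_pos hx m
    apply div_pos (by linarith) h1
  have := mono (Set.self_mem_Ici) (Set.mem_Ici.mpr hv.le) hv
  rwa [aP_zero] at this

lemma aP_pos_small (m : ℕ) (hm : Even m) (hm0 : m ≠ 0) (v : ℝ) (h0 : 0 < v) (h1 : v ≤ 1) :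
    0 < aP m v := by
  have mono : StrictMonoOn (aP m) (Set.Icc (0:ℝ) 1) := by
    apply strictMonoOn_of_deriv_pos (convex_Icc 0 1) (aP_cont m).continuousOn
    intro x hx
    rw [interior_Icc] at hx
    rw [deriv_aP m x hx.1, Even.neg_pow hm]
    have h2 : x^m < 1 := pow_lt_one₀ hx.1.le hx.2 hm0
    apply div_pos (by linarith) (by linarith [hx.1])
  have := mono (Set.mem_Icc.mpr ⟨le_rfl, zero_le_one⟩) (Set.mem_Icc.mpr ⟨h0.le, h1⟩) h0
  rwa [aP_zero] at this

lemma aP_anti (m : ℕ) (hm : Even m) (hm0 : m ≠ 0) : StrictAntiOn (aP m) (Set.Ici (1:ℝ)) := by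
  apply strictAntiOn_of_deriv_neg (convex_Ici 1) (aP_cont m).continuousOn
  intro x hx
  rw [interior_Ici] at hx
  have hx0 : 1 < x := hx
  rw [deriv_aP m x (by linarith), Even.neg_pow hm]
  have h2 : 1 < x^m := one_lt_pow₀ hx0 hm0
  apply div_neg_of_neg_of_pos (by linarith) (by linarith)

lemma aP_root_unique (m : ℕ) (hm : Even m) (hm0 : m ≠ 0) {u v : ℝ}
    (hu : 0 < u) (hv : 0 < v) (hru : aP m u = 0) (hrv : aP m v = 0) : u = v := by
  have h1u : 1 < u := by
    by_contra h
    push_neg at h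
    exact absurd hru (aP_pos_small m hm hm0 u hu h).ne'
  have h1v : 1 < v := by
    by_contra h
    push_neg at h
    exact absurd hrv (aP_pos_small m hm hm0 v hv h).ne'
  exact (aP_anti m hm hm0).injOn (Set.mem_Ici.mpr h1u.le) (Set.mem_Ici.mpr h1v.le)
    (hru.trans hrv.symm)

lemma Dr_cont (m : ℕ) : Continuous (Dr m) := by
  unfold Dr
  exact continuous_finset_sum _ fun k _ =>
    ((continuous_pow k).mul ((continuous_const.add continuous_id).pow _)).div_const _

lemma Dr_pos_of_nonneg (m : ℕ) (hm : m ≠ 0) (x : ℝ) (hx : 0 ≤ x) : 0 < Dr m x := by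
  unfold Dr
  apply Finset.sum_pos'
  · intro k _
    have h1 : (0:ℝ) ≤ 1 + x := by linarith
    exact div_nonneg (mul_nonneg (pow_nonneg hx k) (pow_nonneg h1 _)) (by positivity)
  · refine ⟨0, mem_range.mpr (Nat.pos_of_ne_zero hm), ?_⟩
    have h1 : (0:ℝ) < 1 + x := by linarith
    simp only [pow_zero, one_mul, Nat.cast_zero, zero_add, div_one]
    exact pow_pos h1 _

lemma Dr_neg_sign (m : ℕ) (hm : m ≠ 0) (x : ℝ) (hx : x ≤ -1) :
    0 < (-1:ℝ)^(m-1) * Dr m x := by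
  unfold Dr
  rw [Finset.mul_sum]
  apply Finset.sum_pos'
  · intro k hk
    have hk' := mem_range.mp hk
    set j := m - 1 - k with hjdef
    have key : (-1:ℝ)^(m-1) * (x^k * (1+x)^j/((k:ℝ)+1))
        = (-x)^k * (-(1+x))^j/((k:ℝ)+1) := by
      rw [neg_pow x k, neg_pow (1+x) j, show m-1 = k + j from by omega, pow_add]
      ring
    rw [key]
    have h1 : (0:ℝ) ≤ -x := by linarith
    have h2 : (0:ℝ) ≤ -(1+x) := by linarith
    exact div_nonneg (mul_nonneg (pow_nonneg h1 _) (pow_nonneg h2 _)) (by positivity)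
  · refine ⟨m-1, mem_range.mpr (by omega), ?_⟩
    rw [show m-1-(m-1) = 0 from by omega, pow_zero]
    have key : (-1:ℝ)^(m-1) * (x^(m-1) * 1 / ((↑(m-1):ℝ)+1))
        = (-x)^(m-1)/((↑(m-1):ℝ)+1) := by
      rw [neg_pow x (m-1)]; ring
    rw [key]
    exact div_pos (pow_pos (by linarith) _) (by positivity)

lemma Dr_sub (m : ℕ) (t : ℝ) (h0 : 0 < t) (h1 : t < 1) :
    t * Dr m (-t) = (1-t)^m * aP m (t/(1-t)) := by
  unfold Dr aP
  rw [Finset.mul_sum, Finset.mul_sum]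
  apply Finset.sum_congr rfl
  intro k hk
  have hk' := mem_range.mp hk
  have h1t : (1:ℝ) - t ≠ 0 := by intro h; linarith [h]
  have e : (1-t)^m = (1-t)^(k+1) * (1-t)^(m-1-k) := by
    rw [← pow_add]
    congr 1
    omega
  rw [div_pow, e, neg_pow t k]
  have h1x : (1:ℝ) + -t = 1 - t := by ring
  rw [h1x]
  field_simp
  ring

theorem statement18 (n : ℕ) (hn : 2 ≤ n) :
    (Even n → ∀ x : ℝ, Polynomial.aeval x (Cpoly n) ≠ 0) ∧
    (Odd n → ∃ x : ℝ, x ∈ Set.Ioo (-1 : ℝ) 0 ∧ Polynomial.aeval x (Cpoly n) = 0 ∧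
      ∀ y : ℝ, Polynomial.aeval y (Cpoly n) = 0 → y = x) := by
  set m := n - 1 with hmdef
  have hm1 : 1 ≤ m := by omega
  have heval : ∀ x : ℝ, Polynomial.aeval x (Cpoly n) = Dr m x := fun x => aeval_eq_Dr n x
  constructor
  · intro hev x
    have hmodd : Odd m := Nat.Even.sub_odd (by omega) hev odd_one
    rw [heval x]
    rcases le_or_gt 0 x with h | h
    · exact (Dr_pos_of_nonneg m (by omega) x h).ne'
    rcases le_or_gt x (-1) with h2 | h2
    · have hpos := Dr_neg_sign m (by omega) x h2
      have hpow : (-1:ℝ)^(m-1) = 1 := Even.neg_one_pow (Nat.Odd.sub_odd hmodd odd_one)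
      rw [hpow, one_mul] at hpos
      exact hpos.ne'
    · have h0t : 0 < -x := by linarith
      have h1t : -x < 1 := by linarith
      have hsub := Dr_sub m (-x) h0t h1t
      rw [neg_neg] at hsub
      have hv : 0 < (-x)/(1-(-x)) := div_pos h0t (by linarith)
      have hap := aP_pos_odd m hmodd _ hv
      have hprod : 0 < -x * Dr m x := by
        rw [hsub]
        exact mul_pos (pow_pos (by linarith) m) hap
      have hD : 0 < Dr m x := by
        by_contra hD
        push_neg at hD
        nlinarith
      exact hD.ne'
  · intro hodd
    have hmeven : Even m := Nat.Odd.sub_odd hodd odd_one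
    have hm0 : m ≠ 0 := by omega
    have hneg : Dr m (-1) < 0 := by
      have hpos := Dr_neg_sign m hm0 (-1) le_rfl
      have hpow : (-1:ℝ)^(m-1) = -1 :=
        Odd.neg_one_pow (Nat.Even.sub_odd (by omega) hmeven odd_one)
      rw [hpow] at hpos
      linarith
    have hpos0 : 0 < Dr m 0 := Dr_pos_of_nonneg m hm0 0 le_rfl
    have hmem : (0:ℝ) ∈ Set.Ioo (Dr m (-1)) (Dr m 0) := ⟨hneg, hpos0⟩
    obtain ⟨x, hx, hfx⟩ := intermediate_value_Ioo (by norm_num : (-1:ℝ) ≤ 0)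
      (Dr_cont m).continuousOn hmem
    have key : ∀ z : ℝ, -1 < z → z < 0 → Dr m z = 0 → aP m ((-z)/(1-(-z))) = 0 := by
      intro z hz1 hz0 hz
      have h0 : 0 < -z := by linarith
      have h1 : -z < 1 := by linarith
      have hsub := Dr_sub m (-z) h0 h1
      rw [neg_neg, hz, mul_zero] at hsub
      rcases mul_eq_zero.mp hsub.symm with h | h
      · exact absurd h (pow_pos (by linarith : (0:ℝ) < 1 - -z) m).ne'
      · exact h
    refine ⟨x, hx, by rw [heval x]; exact hfx, ?_⟩
    intro y hy
    rw [heval y] at hy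
    have hy1 : -1 < y := by
      by_contra h
      push_neg at h
      have hpos := Dr_neg_sign m hm0 y h
      rw [hy, mul_zero] at hpos
      exact lt_irrefl _ hpos
    have hy0 : y < 0 := by
      by_contra h
      push_neg at h
      exact absurd hy (Dr_pos_of_nonneg m hm0 y h).ne'
    have hx' := key x hx.1 hx.2 hfx
    have hy' := key y hy1 hy0 hy
    have hu : (-y)/(1-(-y)) = (-x)/(1-(-x)) :=
      aP_root_unique m hmeven hm0
        (div_pos (by linarith) (by linarith))
        (div_pos (by linarith [hx.2]) (by linarith [hx.1])) hy' hx'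
    have hd1 : (1:ℝ) - -y ≠ 0 := by intro h; linarith
    have hd2 : (1:ℝ) - -x ≠ 0 := by intro h; linarith [hx.1]
    rw [div_eq_div_iff hd1 hd2] at hu
    ring_nf at hu
    nlinarith [hu]
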